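/- A monoid Y is a W-Mal'tsev object in the category of monoids if and only if Y is a group; here it suffices to prove: if for every x ∈ Y the element ([x̲],[x̲]) of (Y+Y)×(Y+Y) lies in the image of the map 3Y → 2Y × 2Y defined on coproduct injections by ι₁ ↦ (ι₁,ι₂), ι₂ ↦ (ι₂,ι₂), ι₃ ↦ (ι₂,ι₁), then every element of Y has a two-sided inverse. -/

import Mathlib

namespace WMaltsevAux

open scoped Classical
noncomputable section

variable {Y : Type*} [Monoid Y]

/-- Well-formed stacks: alternating sides, no identity values. -/
def Wf (l : List (Bool × Y)) : Prop :=
  l.Chain' (fun p q => p.1 ≠ q.1) ∧ ∀ p ∈ l, p.2 ≠ 1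

/-- The type of well-formed stacks. -/
def Stk (Y : Type*) [Monoid Y] : Type _ := {l : List (Bool × Y) // Wf l}

/-- Push a letter with side `b` and value `y` onto a raw stack. -/
def pushAux (b : Bool) (y : Y) : List (Bool × Y) → List (Bool × Y)
  | [] => if y = 1 then [] else [(b, y)]
  | (b', u) :: t =>
      if b' = b then (if y * u = 1 then t else (b, y * u) :: t)
      else (if y = 1 then (b', u) :: t else (b, y) :: (b', u) :: t)

@[simp] lemma pushAux_nil_one (b : Bool) : pushAux b (1 : Y) [] = [] := by
  simp [pushAux]

lemma pushAux_nil (b : Bool) {y : Y} (hy : y ≠ 1) : pushAux b y [] = [(b, y)] := by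
  simp [pushAux, hy]

lemma pushAux_same_merge (b : Bool) {y u : Y} (h : y * u ≠ 1) (t : List (Bool × Y)) :
    pushAux b y ((b, u) :: t) = (b, y * u) :: t := by
  simp [pushAux, h]

lemma pushAux_same_pop (b : Bool) {y u : Y} (h : y * u = 1) (t : List (Bool × Y)) :
    pushAux b y ((b, u) :: t) = t := by
  simp [pushAux, h]

lemma pushAux_diff_one {b b' : Bool} (hb : b' ≠ b) (u : Y) (t : List (Bool × Y)) :
    pushAux b (1 : Y) ((b', u) :: t) = (b', u) :: t := by
  simp [pushAux, hb]

lemma pushAux_diff {b b' : Bool} (hb : b' ≠ b) {y : Y} (hy : y ≠ 1) (u : Y)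
    (t : List (Bool × Y)) :
    pushAux b y ((b', u) :: t) = (b, y) :: (b', u) :: t := by
  simp [pushAux, hb, hy]

lemma wf_nil : Wf ([] : List (Bool × Y)) := ⟨List.isChain_nil, by simp⟩

lemma wf_tail {p : Bool × Y} {t : List (Bool × Y)} (h : Wf (p :: t)) : Wf t :=
  ⟨h.1.tail, fun q hq => h.2 q (List.mem_cons_of_mem _ hq)⟩

lemma wf_cons {p : Bool × Y} {t : List (Bool × Y)}
    (ht : Wf t) (hp : p.2 ≠ 1) (hh : ∀ q ∈ t.head?, p.1 ≠ q.1) : Wf (p :: t) := by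
  refine ⟨List.isChain_cons.2 ⟨hh, ht.1⟩, ?_⟩
  intro q hq
  rcases List.mem_cons.1 hq with rfl | hq
  · exact hp
  · exact ht.2 q hq

lemma wf_head_ne {p : Bool × Y} {t : List (Bool × Y)} (h : Wf (p :: t)) :
    ∀ q ∈ t.head?, p.1 ≠ q.1 := by
  cases t with
  | nil => simp
  | cons q t =>
    intro r hr
    simp only [List.head?_cons, Option.mem_def, Option.some.injEq] at hr
    subst hr
    exact (List.isChain_cons_cons.1 h.1).1

lemma wf_pushAux {l : List (Bool × Y)} (h : Wf l) (b : Bool) (y : Y) :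
    Wf (pushAux b y l) := by
  cases l with
  | nil =>
    by_cases hy : y = 1
    · subst hy; rw [pushAux_nil_one]; exact wf_nil
    · rw [pushAux_nil b hy]
      exact wf_cons wf_nil hy (by simp)
  | cons p t =>
    obtain ⟨b', u⟩ := p
    by_cases hb : b' = b
    · subst hb
      by_cases hyu : y * u = 1
      · rw [pushAux_same_pop _ hyu]; exact wf_tail h
      · rw [pushAux_same_merge _ hyu]
        exact wf_cons (wf_tail h) hyu (fun q hq => wf_head_ne h q hq)
    · by_cases hy : y = 1
      · subst hy; rw [pushAux_diff_one hb]; exact h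
      · rw [pushAux_diff hb hy]
        exact wf_cons h hy (by simpa using fun hh => hb hh.symm)

/-- Push on well-formed stacks. -/
def push (b : Bool) (y : Y) (s : Stk Y) : Stk Y :=
  ⟨pushAux b y s.1, wf_pushAux s.2 b y⟩

lemma pushAux_one {l : List (Bool × Y)} (h : Wf l) (b : Bool) :
    pushAux b (1 : Y) l = l := by
  cases l with
  | nil => simp
  | cons p t =>
    obtain ⟨b', u⟩ := p
    by_cases hb : b' = b
    · subst hb
      have hu : u ≠ 1 := h.2 (b', u) List.mem_cons_self
      rw [pushAux_same_merge _ (by simpa using hu), one_mul]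
    · exact pushAux_diff_one hb u t

lemma pushAux_pushAux {l : List (Bool × Y)} (h : Wf l) (b : Bool) (y y' : Y) :
    pushAux b y (pushAux b y' l) = pushAux b (y * y') l := by
  cases l with
  | nil =>
    by_cases hy' : y' = 1
    · subst hy'; rw [mul_one, pushAux_nil_one]
    · rw [pushAux_nil b hy']
      by_cases hyy : y * y' = 1
      · rw [pushAux_same_pop _ hyy]; simp [pushAux, hyy]
      · rw [pushAux_same_merge _ hyy, pushAux_nil b hyy]
  | cons p t =>
    obtain ⟨b', u⟩ := p
    by_cases hb : b' = b
    · subst hb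
      by_cases hy'u : y' * u = 1
      · rw [pushAux_same_pop _ hy'u]
        have hyu : y * y' * u = y := by rw [mul_assoc, hy'u, mul_one]
        cases t with
        | nil =>
          by_cases hy : y = 1
          · rw [pushAux_same_pop _ (hyu.trans hy)]; simp [hy]
          · rw [pushAux_same_merge _ (fun hh => hy (hyu ▸ hh)), hyu, pushAux_nil _ hy]
        | cons q t' =>
          have hq : b' ≠ q.1 := (List.isChain_cons_cons.1 h.1).1
          obtain ⟨bq, uq⟩ := q
          by_cases hy : y = 1
          · rw [pushAux_same_pop _ (hyu.trans hy), hy,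
              pushAux_one (wf_tail h) b']
          · rw [pushAux_diff (fun hh => hq hh.symm) hy,
              pushAux_same_merge _ (fun hh => hy (hyu ▸ hh)), hyu]
      · rw [pushAux_same_merge _ hy'u]
        by_cases hyy : y * (y' * u) = 1
        · rw [pushAux_same_pop _ hyy, pushAux_same_pop _ (by rwa [mul_assoc])]
        · rw [pushAux_same_merge _ hyy,
            pushAux_same_merge _ (by rwa [mul_assoc]), mul_assoc]
    · by_cases hy' : y' = 1
      · subst hy'; rw [mul_one, pushAux_diff_one hb]
    
      · rw [pushAux_diff hb hy']
        by_cases hyy : y * y' = 1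
        · rw [pushAux_same_pop _ hyy, hyy, pushAux_diff_one hb]
        · rw [pushAux_same_merge _ hyy, pushAux_diff hb hyy]


lemma push_push (b : Bool) (y y' : Y) (s : Stk Y) :
    push b y (push b y' s) = push b (y * y') s :=
  Subtype.ext (pushAux_pushAux s.2 b y y')

lemma push_one (b : Bool) (s : Stk Y) : push b (1 : Y) s = s :=
  Subtype.ext (pushAux_one s.2 b)

/-- Pushing with a fixed side, as a monoid hom to `Function.End`. -/
def σ (b : Bool) : Y →* Function.End (Stk Y) where
  toFun y := fun s => push b y s
  map_one' := by funext s; exact push_one b s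
  map_mul' y y' := by funext s; exact (push_push b y y' s).symm

@[simp] lemma σ_apply (b : Bool) (y : Y) (s : Stk Y) : σ b y s = push b y s := rfl

/-! ### The certificate predicate `CW` -/

/-- The key inductive certificate predicate on (pending value, raw stack). -/
inductive CW : Y → List (Bool × Y) → Prop
  | nil (w γ : Y) (h : w * γ = 1) : CW w []
  | lnew {w : Y} {t : List (Bool × Y)} (z : Y) (h : CW w t) :
      CW (z * w) ((true, z) :: t)
  | lmerge {w a : Y} {t : List (Bool × Y)} (z : Y) (h : CW w ((true, a) :: t)) :
      CW (z * w) ((true, z * a) :: t)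
  | rnewK {w : Y} {t : List (Bool × Y)} (z : Y) (h : CW w t) :
      CW (z * w) ((false, z) :: t)
  | rmergeK {w u : Y} {t : List (Bool × Y)} (z : Y) (h : CW w ((false, u) :: t)) :
      CW (z * w) ((false, z * u) :: t)
  | rnewT {t : List (Bool × Y)} (c : Y) (h : CW 1 t) : CW 1 ((false, c) :: t)
  | rmergeT {u : Y} {t : List (Bool × Y)} (c : Y) (h : CW 1 ((false, u) :: t)) :
      CW 1 ((false, c * u) :: t)
  | rinv {s : List (Bool × Y)} (z ζ : Y) (hz : z * ζ = 1) (h : CW 1 s) : CW z s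

/-- Pendings over the empty stack are right invertible. -/
lemma cw_nil_rinv : ∀ {w : Y} {s : List (Bool × Y)}, CW w s → s = [] →
    ∃ γ, w * γ = 1 := by
  intro w s h
  induction h with
  | nil w γ h => exact fun _ => ⟨γ, h⟩
  | rinv z ζ hz h ih => exact fun _ => ⟨ζ, hz⟩
  | lnew z h ih => exact fun hh => by cases hh
  | lmerge z h ih => exact fun hh => by cases hh
  | rnewK z h ih => exact fun hh => by cases hh
  | rmergeK z h ih => exact fun hh => by cases hh
  | rnewT c h ih => exact fun hh => by cases hh
  | rmergeT c h ih => exact fun hh => by cases hh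

/-- Pendings may be multiplied on the right by right-invertible elements. -/
lemma cw_rmul : ∀ {w : Y} {s : List (Bool × Y)}, CW w s →
    ∀ j ζ : Y, j * ζ = 1 → CW (w * j) s := by
  intro w s h
  induction h with
  | nil w γ h =>
    intro j ζ hj
    refine CW.nil _ (ζ * γ) ?_
    calc w * j * (ζ * γ) = w * (j * ζ) * γ := by simp [mul_assoc]
    _ = 1 := by rw [hj, mul_one, h]
  | lnew z h ih =>
    intro j ζ hj
    rw [mul_assoc]
    exact CW.lnew z (ih j ζ hj)
  | lmerge z h ih =>
    intro j ζ hj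
    rw [mul_assoc]
    exact CW.lmerge z (ih j ζ hj)
  | rnewK z h ih =>
    intro j ζ hj
    rw [mul_assoc]
    exact CW.rnewK z (ih j ζ hj)
  | rmergeK z h ih =>
    intro j ζ hj
    rw [mul_assoc]
    exact CW.rmergeK z (ih j ζ hj)
  | rnewT c h ih =>
    intro j ζ hj
    rw [one_mul]
    exact CW.rinv j ζ hj (CW.rnewT c h)
  | rmergeT c h ih =>
    intro j ζ hj
    rw [one_mul]
    exact CW.rinv j ζ hj (CW.rmergeT c h)
  | rinv z ζ₀ hz h ih =>
    intro j ζ hj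
    refine CW.rinv _ (ζ * ζ₀) ?_ h
    calc z * j * (ζ * ζ₀) = z * (j * ζ) * ζ₀ := by simp [mul_assoc]
    _ = 1 := by rw [hj, mul_one, hz]

/-- A unit pending may be replaced by `1`. -/
lemma cw_unit : ∀ {w : Y} {s : List (Bool × Y)}, CW w s → IsUnit w → CW 1 s := by
  intro w s h
  induction h with
  | nil w γ h => exact fun _ => CW.nil 1 1 (one_mul 1)
  | @lnew w t z h ih =>
    intro hu
    obtain ⟨ρ, hρ⟩ := hu
    have h2 := cw_rmul h (↑ρ⁻¹) (↑ρ) (Units.inv_mul ρ)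
    have h3 := CW.lnew z h2
    have hc : z * (w * ↑ρ⁻¹) = 1 := by
      rw [← mul_assoc, ← hρ]; exact Units.mul_inv ρ
    rwa [hc] at h3
  | @lmerge w a t z h ih =>
    intro hu
    obtain ⟨ρ, hρ⟩ := hu
    have h2 := cw_rmul h (↑ρ⁻¹) (↑ρ) (Units.inv_mul ρ)
    have h3 := CW.lmerge z h2
    have hc : z * (w * ↑ρ⁻¹) = 1 := by
      rw [← mul_assoc, ← hρ]; exact Units.mul_inv ρ
    rwa [hc] at h3
  | @rnewK w t z h ih =>
    intro hu
    obtain ⟨ρ, hρ⟩ := hu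
    have h2 := cw_rmul h (↑ρ⁻¹) (↑ρ) (Units.inv_mul ρ)
    have h3 := CW.rnewK z h2
    have hc : z * (w * ↑ρ⁻¹) = 1 := by
      rw [← mul_assoc, ← hρ]; exact Units.mul_inv ρ
    rwa [hc] at h3
  | @rmergeK w u t z h ih =>
    intro hu
    obtain ⟨ρ, hρ⟩ := hu
    have h2 := cw_rmul h (↑ρ⁻¹) (↑ρ) (Units.inv_mul ρ)
    have h3 := CW.rmergeK z h2
    have hc : z * (w * ↑ρ⁻¹) = 1 := by
      rw [← mul_assoc, ← hρ]; exact Units.mul_inv ρ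
    rwa [hc] at h3
  | rnewT c h ih => exact fun _ => CW.rnewT c h
  | rmergeT c h ih => exact fun _ => CW.rmergeT c h
  | rinv z ζ hz h ih => exact fun _ => h


/-- The pop package: heads of `CW`-stacks may be cancelled. -/
lemma cw_pops : ∀ {w : Y} {s : List (Bool × Y)}, CW w s →
    (∀ a t z, s = (true, a) :: t → z * a = 1 → CW (z * w) t) ∧
    (∀ u t z, s = (false, u) :: t → z * u = 1 → CW (z * w) t) ∧
    (∀ u t z ξ P, s = (false, u) :: t → P * w = 1 → z * ξ * P * u = 1 → CW z t) := by
  intro w s h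
  induction h with
  | nil w γ h =>
    exact ⟨fun _ _ _ h => by simp at h, fun _ _ _ h => by simp at h,
      fun _ _ _ _ _ h => by simp at h⟩
  | @lnew w t₀ z₁ h ih =>
    refine ⟨?_, fun _ _ _ h => by simp at h, fun _ _ _ _ _ h => by simp at h⟩
    intro a t z heq hz
    rw [List.cons.injEq, Prod.mk.injEq] at heq
    obtain ⟨⟨-, rfl⟩, rfl⟩ := heq
    have hzw : z * (z₁ * w) = w := by rw [← mul_assoc, hz, one_mul]
    rwa [hzw]
  | @lmerge w a₀ t₀ z₁ h ih =>
    refine ⟨?_, fun _ _ _ h => by simp at h, fun _ _ _ _ _ h => by simp at h⟩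
    intro a t z heq hz
    rw [List.cons.injEq, Prod.mk.injEq] at heq
    obtain ⟨⟨-, rfl⟩, rfl⟩ := heq
    have h1 := ih.1 a₀ t₀ (z * z₁) rfl (by rwa [mul_assoc])
    rwa [mul_assoc] at h1
  | @rnewK w t₀ z₁ h ih =>
    refine ⟨fun _ _ _ h => by simp at h, ?_, ?_⟩
    · intro u t z heq hz
      rw [List.cons.injEq, Prod.mk.injEq] at heq
      obtain ⟨⟨-, rfl⟩, rfl⟩ := heq
      have hzw : z * (z₁ * w) = w := by rw [← mul_assoc, hz, one_mul]
      rwa [hzw]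
    · intro u t z ξ P heq hP hzz
      rw [List.cons.injEq, Prod.mk.injEq] at heq
      obtain ⟨⟨-, rfl⟩, rfl⟩ := heq
      have hPz : P * z₁ * w = 1 := by rwa [mul_assoc]
      have hw : w = z * ξ := by
        calc w = z * ξ * P * z₁ * w := by rw [hzz, one_mul]
        _ = z * ξ * (P * z₁ * w) := by simp only [mul_assoc]
        _ = z * ξ := by rw [hPz, mul_one]
      have hwu : IsUnit w := by
        refine ⟨⟨w, P * z₁, ?_, ?_⟩, rfl⟩
        · rw [hw]; simpa only [mul_assoc] using hzz
        · rwa [mul_assoc]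
      have h1 : CW 1 t₀ := cw_unit h hwu
      have h2 : z * (ξ * (P * z₁)) = 1 := by simpa only [mul_assoc] using hzz
      exact CW.rinv z _ h2 h1
  | @rmergeK w u₀ t₀ z₁ h ih =>
    refine ⟨fun _ _ _ h => by simp at h, ?_, ?_⟩
    · intro u t z heq hz
      rw [List.cons.injEq, Prod.mk.injEq] at heq
      obtain ⟨⟨-, rfl⟩, rfl⟩ := heq
      have h1 := ih.2.1 u₀ t₀ (z * z₁) rfl (by rwa [mul_assoc])
      rwa [mul_assoc] at h1
    · intro u t z ξ P heq hP hzz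
      rw [List.cons.injEq, Prod.mk.injEq] at heq
      obtain ⟨⟨-, rfl⟩, rfl⟩ := heq
      refine ih.2.2 u₀ t₀ z ξ (P * z₁) rfl (by rwa [mul_assoc]) ?_
      calc z * ξ * (P * z₁) * u₀ = z * ξ * P * (z₁ * u₀) := by simp only [mul_assoc]
      _ = 1 := hzz
  | @rnewT t₀ c h ih =>
    refine ⟨fun _ _ _ h => by simp at h, ?_, ?_⟩
    · intro u t z heq hz
      rw [List.cons.injEq, Prod.mk.injEq] at heq
      obtain ⟨⟨-, rfl⟩, rfl⟩ := heq
      rw [mul_one]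
      exact CW.rinv z c hz h
    · intro u t z ξ P heq hP hzz
      rw [List.cons.injEq, Prod.mk.injEq] at heq
      obtain ⟨⟨-, rfl⟩, rfl⟩ := heq
      refine CW.rinv z (ξ * P * c) ?_ h
      simpa only [mul_assoc] using hzz
  | @rmergeT u₀ t₀ c h ih =>
    refine ⟨fun _ _ _ h => by simp at h, ?_, ?_⟩
    · intro u t z heq hz
      rw [List.cons.injEq, Prod.mk.injEq] at heq
      obtain ⟨⟨-, rfl⟩, rfl⟩ := heq
      rw [mul_one]
      refine ih.2.2 u₀ t₀ z c 1 rfl (mul_one 1) ?_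
      rw [mul_one]; rwa [mul_assoc]
    · intro u t z ξ P heq hP hzz
      rw [List.cons.injEq, Prod.mk.injEq] at heq
      obtain ⟨⟨-, rfl⟩, rfl⟩ := heq
      refine ih.2.2 u₀ t₀ z (ξ * P * c) 1 rfl (mul_one 1) ?_
      rw [mul_one]
      calc z * (ξ * P * c) * u₀ = z * ξ * P * (c * u₀) := by simp only [mul_assoc]
      _ = 1 := hzz
  | @rinv s₀ z₀ ζ₀ hz₀ h ih =>
    refine ⟨?_, ?_, ?_⟩
    · rintro a t z rfl hz
      have h1 := ih.1 a t z rfl hz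
      have h2 := cw_rmul h1 z₀ ζ₀ hz₀
      rwa [mul_one] at h2
    · rintro u t z rfl hz
      have h1 := ih.2.1 u t z rfl hz
      have h2 := cw_rmul h1 z₀ ζ₀ hz₀
      rwa [mul_one] at h2
    · rintro u t z ξ P rfl hP hzz
      refine ih.2.2 u t z (ξ * P) 1 rfl (mul_one 1) ?_
      rw [mul_one]; rwa [← mul_assoc]


/-- Extraction: a singleton `L`-stack with completable pending forces a unit. -/
lemma cw_ext : ∀ {w : Y} {s : List (Bool × Y)}, CW w s → ∀ A, s = [(true, A)] →
    ∀ P, P * w = 1 → ∃ W, P * A * W = 1 ∧ IsUnit W := by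
  intro w s h
  induction h with
  | nil w γ h => intro A hA; simp at hA
  | @lnew w t₀ z₁ h ih =>
    intro A hA P hP
    rw [List.cons.injEq, Prod.mk.injEq] at hA
    obtain ⟨⟨-, rfl⟩, rfl⟩ := hA
    obtain ⟨γ, hγ⟩ := cw_nil_rinv h rfl
    have hPw : P * z₁ * w = 1 := by rwa [mul_assoc]
    refine ⟨w, hPw, ?_⟩
    have hγ' : γ = P * z₁ := by
      calc γ = P * z₁ * w * γ := by rw [hPw, one_mul]
      _ = P * z₁ * (w * γ) := by rw [mul_assoc]
      _ = P * z₁ := by rw [hγ, mul_one]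
    exact ⟨⟨w, γ, hγ, by rw [hγ']; exact hPw⟩, rfl⟩
  | @lmerge w a₀ t₀ z₁ h ih =>
    intro A hA P hP
    rw [List.cons.injEq, Prod.mk.injEq] at hA
    obtain ⟨⟨-, rfl⟩, rfl⟩ := hA
    obtain ⟨W, hW, hWu⟩ := ih a₀ rfl (P * z₁) (by rwa [mul_assoc])
    exact ⟨W, by rw [← hW]; simp only [mul_assoc], hWu⟩
  | @rnewK w t₀ z₁ h ih => intro A hA; simp at hA
  | @rmergeK w u₀ t₀ z₁ h ih => intro A hA; simp at hA
  | @rnewT t₀ c h ih => intro A hA; simp at hA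
  | @rmergeT u₀ t₀ c h ih => intro A hA; simp at hA
  | @rinv s₀ z₀ ζ₀ hz₀ h ih =>
    intro A hA P hP
    subst hA
    obtain ⟨W, hW, hWu⟩ := ih A rfl 1 (one_mul 1)
    rw [one_mul] at hW
    have hz₀u : IsUnit z₀ := by
      have hζ : ζ₀ = P := by
        calc ζ₀ = P * z₀ * ζ₀ := by rw [hP, one_mul]
        _ = P * (z₀ * ζ₀) := by rw [mul_assoc]
        _ = P := by rw [hz₀, mul_one]
      exact ⟨⟨z₀, ζ₀, hz₀, by rw [hζ]; exact hP⟩, rfl⟩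
    refine ⟨W * z₀, ?_, hWu.mul hz₀u⟩
    calc P * A * (W * z₀) = P * (A * W) * z₀ := by simp only [mul_assoc]
    _ = 1 := by rw [hW, mul_one, hP]

/-- Extraction at clean singletons. -/
lemma cw_one_single {x : Y} (h : CW 1 [(true, x)]) : ∃ y, x * y = 1 ∧ y * x = 1 := by
  obtain ⟨W, hW, hWu⟩ := cw_ext h x rfl 1 (mul_one 1)
  rw [one_mul] at hW
  obtain ⟨ρ, hρ⟩ := hWu
  refine ⟨W, hW, ?_⟩
  have hx : x = ↑ρ⁻¹ := by
    calc x = x * (W * ↑ρ⁻¹) := by rw [← hρ, Units.mul_inv, mul_one]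
    _ = (x * W) * ↑ρ⁻¹ := by rw [mul_assoc]
    _ = ↑ρ⁻¹ := by rw [hW, one_mul]
  rw [hx, ← hρ]
  exact Units.mul_inv ρ

/-! ### The pending of a view-1 stack -/

/-- Product of all values of a stack except a bottommost left letter. -/
def pend : List (Bool × Y) → Y
  | [] => 1
  | [(b, u)] => if b = true then 1 else u
  | (_, u) :: p :: t => u * pend (p :: t)

@[simp] lemma pend_nil : pend ([] : List (Bool × Y)) = 1 := rfl
@[simp] lemma pend_singL (u : Y) : pend [(true, u)] = 1 := rfl
@[simp] lemma pend_singR (u : Y) : pend [(false, u)] = u := rfl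
lemma pend_cons (b : Bool) (u : Y) (p : Bool × Y) (t : List (Bool × Y)) :
    pend ((b, u) :: p :: t) = u * pend (p :: t) := rfl

lemma pend_cons_false (u : Y) (t : List (Bool × Y)) :
    pend ((false, u) :: t) = u * pend t := by
  cases t with
  | nil => simp
  | cons p t => rw [pend_cons]

/-- Pushing on the right (view-1 side `false`) multiplies the pending. -/
lemma pend_pushR {l : List (Bool × Y)} (h : Wf l) (y : Y) :
    pend (pushAux false y l) = y * pend l := by
  cases l with
  | nil =>
    by_cases hy : y = 1
    · subst hy; simp
    · rw [pushAux_nil _ hy]; simp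
  | cons p t =>
    obtain ⟨b', u⟩ := p
    cases b' with
    | false =>
      by_cases hyu : y * u = 1
      · rw [pushAux_same_pop _ hyu, pend_cons_false, ← mul_assoc, hyu, one_mul]
      · rw [pushAux_same_merge _ hyu, pend_cons_false, pend_cons_false, mul_assoc]
    | true =>
      by_cases hy : y = 1
      · subst hy; rw [pushAux_one h, one_mul]
      · rw [pushAux_diff (by simp) hy, pend_cons_false]

/-- Pushing on the left (view-1 side `true`): dichotomy for the pending. -/
lemma pend_pushL {l : List (Bool × Y)} (h : Wf l) (y : Y) :
    pend (pushAux true y l) = y * pend l ∨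
      (pend l = 1 ∧ pend (pushAux true y l) = 1) := by
  cases l with
  | nil =>
    right
    refine ⟨rfl, ?_⟩
    by_cases hy : y = 1
    · subst hy; simp
    · rw [pushAux_nil _ hy]; simp
  | cons p t =>
    obtain ⟨b', u⟩ := p
    cases b' with
    | true =>
      cases t with
      | nil =>
        right
        refine ⟨by simp, ?_⟩
        by_cases hyu : y * u = 1
        · rw [pushAux_same_pop _ hyu]; simp
        · rw [pushAux_same_merge _ hyu]; simp
      | cons q t' =>
        left
        by_cases hyu : y * u = 1
        · rw [pushAux_same_pop _ hyu, pend_cons, ← mul_assoc, hyu, one_mul]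
        · rw [pushAux_same_merge _ hyu, pend_cons, pend_cons, mul_assoc]
    | false =>
      left
      by_cases hy : y = 1
      · subst hy; rw [pushAux_one h, one_mul]
      · rw [pushAux_diff (by simp) hy, pend_cons]

/-- Kernel step: any push multiplies the pending. -/
lemma cw_kstep {w : Y} {l : List (Bool × Y)} (b : Bool) (y : Y)
    (h : CW w l) : CW (y * w) (pushAux b y l) := by
  cases l with
  | nil =>
    by_cases hy : y = 1
    · subst hy; rw [one_mul, pushAux_nil_one]; exact h
    · rw [pushAux_nil _ hy]
      cases b with
      | true => exact CW.lnew y h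
      | false => exact CW.rnewK y h
  | cons p t =>
    obtain ⟨b', u⟩ := p
    by_cases hb : b' = b
    · subst hb
      by_cases hyu : y * u = 1
      · rw [pushAux_same_pop _ hyu]
        cases b' with
        | true => exact (cw_pops h).1 u t y rfl hyu
        | false => exact (cw_pops h).2.1 u t y rfl hyu
      · rw [pushAux_same_merge _ hyu]
        cases b' with
        | true => exact CW.lmerge y h
        | false => exact CW.rmergeK y h
    · by_cases hy : y = 1
      · subst hy; rw [one_mul, pushAux_diff_one hb]; exact h
      · rw [pushAux_diff hb hy]
        cases b with
        | true => exact CW.lnew y h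
        | false => exact CW.rnewK y h

/-- Toplevel step: a clean `R`-push stays clean. -/
lemma cw_tstep {l : List (Bool × Y)} (c : Y) (h : CW 1 l) :
    CW 1 (pushAux false c l) := by
  cases l with
  | nil =>
    by_cases hc : c = 1
    · subst hc; rwa [pushAux_nil_one]
    · rw [pushAux_nil _ hc]; exact CW.rnewT c (CW.nil 1 1 (one_mul 1))
  | cons p t =>
    obtain ⟨b', u⟩ := p
    cases b' with
    | false =>
      by_cases hcu : c * u = 1
      · rw [pushAux_same_pop _ hcu]
        refine (cw_pops h).2.2 u t 1 c 1 rfl (mul_one 1) ?_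
        rw [one_mul, mul_one]; exact hcu
      · rw [pushAux_same_merge _ hcu]; exact CW.rmergeT c h
    | true =>
      by_cases hc : c = 1
      · subst hc; rwa [pushAux_diff_one (by simp)]
      · rw [pushAux_diff (by simp) hc]; exact CW.rnewT c h


/-! ### The paired invariant and the three moves -/

/-- The joint invariant on pairs of stacks. -/
def Good (s₁ s₂ : Stk Y) : Prop := CW (pend s₁.1) s₂.1

lemma good_nil : Good (⟨[], wf_nil⟩ : Stk Y) ⟨[], wf_nil⟩ := by
  show CW (pend ([] : List (Bool × Y))) []
  rw [pend_nil]
  exact CW.nil 1 1 (one_mul 1)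

/-- Move 1: `ι₁ ↦ (L, R)`. -/
lemma good_mv1 (y : Y) {s₁ s₂ : Stk Y} (h : Good s₁ s₂) :
    Good (push true y s₁) (push false y s₂) := by
  rcases pend_pushL s₁.2 y with hp | ⟨hp1, hp2⟩
  · show CW (pend (pushAux true y s₁.1)) (pushAux false y s₂.1)
    rw [hp]
    exact cw_kstep false y h
  · show CW (pend (pushAux true y s₁.1)) (pushAux false y s₂.1)
    rw [hp2]
    have h1 : CW 1 s₂.1 := by rw [← hp1]; exact h
    exact cw_tstep y h1
/-- Move 2: `ι₂ ↦ (R, R)`. -/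
lemma good_mv2 (y : Y) {s₁ s₂ : Stk Y} (h : Good s₁ s₂) :
    Good (push false y s₁) (push false y s₂) := by
  show CW (pend (pushAux false y s₁.1)) (pushAux false y s₂.1)
  rw [pend_pushR s₁.2]
  exact cw_kstep false y h

/-- Move 3: `ι₃ ↦ (R, L)`. -/
lemma good_mv3 (y : Y) {s₁ s₂ : Stk Y} (h : Good s₁ s₂) :
    Good (push false y s₁) (push true y s₂) := by
  show CW (pend (pushAux false y s₁.1)) (pushAux true y s₂.1)
  rw [pend_pushR s₁.2]
  exact cw_kstep true y h

end
end WMaltsevAux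

open Monoid

open WMaltsevAux in
/-- A monoid `Y` is a W-Mal'tsev object in `Mon` iff it is a group. It suffices to
prove: if for every `x : Y` the element `(ι₁ x, ι₁ x)` of `(Y ∗ Y) × (Y ∗ Y)` lies
in the image of the homomorphism `Y ∗ (Y ∗ Y) →* (Y ∗ Y) × (Y ∗ Y)` induced by
`ι₁ ↦ (ι₁, ι₂)`, `ι₂ ↦ (ι₂, ι₂)`, `ι₃ ↦ (ι₂, ι₁)`, then every element of `Y` has a
two-sided inverse. -/
theorem W_maltsev_monoid_is_group {Y : Type*} [Monoid Y]
    (f : Coprod Y (Coprod Y Y) →* (Coprod Y Y) × (Coprod Y Y))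
    (hf : f = Coprod.lift
      ((Coprod.inl : Y →* Coprod Y Y).prod (Coprod.inr : Y →* Coprod Y Y))
      (Coprod.lift
        ((Coprod.inr : Y →* Coprod Y Y).prod (Coprod.inr : Y →* Coprod Y Y))
        ((Coprod.inr : Y →* Coprod Y Y).prod (Coprod.inl : Y →* Coprod Y Y))))
    (h : ∀ x : Y, ∃ a, f a = (Coprod.inl x, Coprod.inl x)) :
    ∀ x : Y, ∃ y : Y, x * y = 1 ∧ y * x = 1 := by
  classical
  intro x
  obtain ⟨a, ha⟩ := h x
  set L : Y →* Function.End (Stk Y) := σ true with hL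
  set R : Y →* Function.End (Stk Y) := σ false with hR
  set Φ : Coprod Y Y →* Function.End (Stk Y) := Coprod.lift L R with hΦ
  -- the two composite homomorphisms
  set g₁ : Coprod Y (Coprod Y Y) →* Function.End (Stk Y) :=
    Coprod.lift L (Coprod.lift R R) with hg₁
  set g₂ : Coprod Y (Coprod Y Y) →* Function.End (Stk Y) :=
    Coprod.lift R (Coprod.lift R L) with hg₂
  have hfst : ((MonoidHom.fst _ _).comp f) a = Coprod.inl x := by
    simp [ha]
  have hsnd : ((MonoidHom.snd _ _).comp f) a = Coprod.inl x := by
    simp [ha]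
  have hcomp1 : Φ.comp ((MonoidHom.fst _ _).comp f) = g₁ := by
    rw [hf]
    refine Coprod.hom_ext ?_ ?_
    · rw [MonoidHom.comp_assoc, MonoidHom.comp_assoc, Coprod.lift_comp_inl,
        MonoidHom.fst_comp_prod]
      exact (Coprod.lift_comp_inl _ _).symm
    · rw [MonoidHom.comp_assoc, MonoidHom.comp_assoc, Coprod.lift_comp_inr,
        Coprod.comp_lift, Coprod.comp_lift, MonoidHom.fst_comp_prod,
        MonoidHom.fst_comp_prod, hΦ, Coprod.lift_comp_inr]
      exact (Coprod.lift_comp_inr _ _).symm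
  have hcomp2 : Φ.comp ((MonoidHom.snd _ _).comp f) = g₂ := by
    rw [hf]
    refine Coprod.hom_ext ?_ ?_
    · rw [MonoidHom.comp_assoc, MonoidHom.comp_assoc, Coprod.lift_comp_inl,
        MonoidHom.snd_comp_prod, hΦ, Coprod.lift_comp_inr]
      exact (Coprod.lift_comp_inl _ _).symm
    · rw [MonoidHom.comp_assoc, MonoidHom.comp_assoc, Coprod.lift_comp_inr,
        Coprod.comp_lift, Coprod.comp_lift, MonoidHom.snd_comp_prod,
        MonoidHom.snd_comp_prod, hΦ, Coprod.lift_comp_inr, Coprod.lift_comp_inl]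
      exact (Coprod.lift_comp_inr _ _).symm
  have hga1 : g₁ a = L x := by
    rw [← hcomp1, MonoidHom.comp_apply, hfst]
    simp [hΦ]
  have hga2 : g₂ a = L x := by
    rw [← hcomp2, MonoidHom.comp_apply, hsnd]
    simp [hΦ]
  -- invariance
  have key : ∀ c : Coprod Y (Coprod Y Y), ∀ s₁ s₂ : Stk Y,
      Good s₁ s₂ → Good (g₁ c s₁) (g₂ c s₂) := by
    intro c
    induction c using Coprod.induction_on with
    | inl y =>
      intro s₁ s₂ hg
      simpa [hg₁, hg₂, hL, hR] using good_mv1 y hg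
    | inr q =>
      induction q using Coprod.induction_on with
      | inl y =>
        intro s₁ s₂ hg
        simpa [hg₁, hg₂, hL, hR] using good_mv2 y hg
      | inr y =>
        intro s₁ s₂ hg
        simpa [hg₁, hg₂, hL, hR] using good_mv3 y hg
      | mul p q ihp ihq =>
        intro s₁ s₂ hg
        have e1 : g₁ (Coprod.inr (p * q)) = g₁ (Coprod.inr p) * g₁ (Coprod.inr q) := by
          rw [map_mul, map_mul]
        have e2 : g₂ (Coprod.inr (p * q)) = g₂ (Coprod.inr p) * g₂ (Coprod.inr q) := by
          rw [map_mul, map_mul]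
        rw [e1, e2]
        exact ihp _ _ (ihq _ _ hg)
    | mul p q ihp ihq =>
      intro s₁ s₂ hg
      rw [map_mul g₁ p q, map_mul g₂ p q]
      exact ihp _ _ (ihq _ _ hg)
  have hfin : Good (g₁ a ⟨[], wf_nil⟩) (g₂ a ⟨[], wf_nil⟩) :=
    key a _ _ good_nil
  rw [hga1, hga2] at hfin
  by_cases hx : x = 1
  · exact ⟨1, by simp [hx]⟩
  · have hLx : (L x ⟨[], wf_nil⟩ : Stk Y).1 = [(true, x)] := by
      show pushAux true x [] = [(true, x)]
      exact pushAux_nil _ hx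
    have hfin2 : CW (pend ((L x ⟨[], wf_nil⟩ : Stk Y)).1) [(true, x)] := by
      rw [← hLx]; exact hfin
    rw [hLx] at hfin2
    rw [pend_singL] at hfin2
    exact cw_one_single hfin2
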